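/- A binary word v is an abelian square if and only if there exists a word u such that v is a shuffle of u with its reversal u^R. Moreover, for an arbitrary finite alphabet, if v is a shuffle of some word u with its reversal u^R, then v is an abelian square. -/
import Mathlib


/-- `Shuffle x y v` holds if `v` can be obtained by interleaving `x` and `y`. -/
inductive Shuffle {α : Type*} : List α → List α → List α → Prop
  | nil : Shuffle [] [] []
  | left {a : α} {x y v : List α} : Shuffle x y v → Shuffle (a :: x) y (a :: v)
  | right {a : α} {x y v : List α} : Shuffle x y v → Shuffle x (a :: y) (a :: v)

/-- An abelian square: a word of the form `v₁ v₂` with `|v₁| = |v₂|` and `v₁`, `v₂`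
having the same number of occurrences of each letter. -/
def IsAbSquare {α : Type*} [DecidableEq α] (v : List α) : Prop :=
  ∃ v₁ v₂ : List α, v = v₁ ++ v₂ ∧ v₁.length = v₂.length ∧ ∀ a, v₁.count a = v₂.count a

theorem Shuffle.comm {α : Type*} {x y v : List α} (h : Shuffle x y v) : Shuffle y x v := by
  induction h with
  | nil => exact Shuffle.nil
  | left _ ih => exact Shuffle.right ih
  | right _ ih => exact Shuffle.left ih

theorem Shuffle.length_eq {α : Type*} {x y v : List α} (h : Shuffle x y v) :
    v.length = x.length + y.length := by
  induction h with
  | nil => simp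
  | left _ ih => simp [ih]; omega
  | right _ ih => simp [ih]; omega

theorem Shuffle.count_eq {α : Type*} [DecidableEq α] {x y v : List α} (h : Shuffle x y v)
    (a : α) : v.count a = x.count a + y.count a := by
  induction h with
  | nil => simp
  | left _ ih => simp [List.count_cons, ih]; omega
  | right _ ih => simp [List.count_cons, ih]; omega

theorem Shuffle.append {α : Type*} {x y v x' y' v' : List α} (h : Shuffle x y v)
    (h' : Shuffle x' y' v') : Shuffle (x ++ x') (y ++ y') (v ++ v') := by
  induction h with
  | nil => simpa using h'
  | left _ ih => exact Shuffle.left ih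
  | right _ ih => exact Shuffle.right ih

theorem Shuffle.split {α : Type*} {x y v : List α} (h : Shuffle x y v) :
    ∀ n ≤ v.length, ∃ x₁ x₂ y₁ y₂ v₁ v₂ : List α,
      x = x₁ ++ x₂ ∧ y = y₁ ++ y₂ ∧ v = v₁ ++ v₂ ∧ v₁.length = n ∧
        Shuffle x₁ y₁ v₁ ∧ Shuffle x₂ y₂ v₂ := by
  induction h with
  | nil =>
    intro n hn
    simp at hn
    exact ⟨[], [], [], [], [], [], by simp [hn], by simp, by simp, by simp [hn],
      Shuffle.nil, Shuffle.nil⟩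
  | @left a x y v h ih =>
    intro n hn
    match n with
    | 0 =>
      exact ⟨[], a :: x, [], y, [], a :: v, rfl, rfl, rfl, rfl, Shuffle.nil, Shuffle.left h⟩
    | (k+1) =>
      obtain ⟨x₁, x₂, y₁, y₂, v₁, v₂, hx, hy, hv, hl, h1, h2⟩ := ih k (by simp at hn; omega)
      exact ⟨a :: x₁, x₂, y₁, y₂, a :: v₁, v₂, by simp [hx], hy, by simp [hv],
        by simp [hl], Shuffle.left h1, h2⟩
  | @right a x y v h ih =>
    intro n hn
    match n with
    | 0 =>
      exact ⟨[], x, [], a :: y, [], a :: v, rfl, rfl, rfl, rfl, Shuffle.nil, Shuffle.right h⟩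
    | (k+1) =>
      obtain ⟨x₁, x₂, y₁, y₂, v₁, v₂, hx, hy, hv, hl, h1, h2⟩ := ih k (by simp at hn; omega)
      exact ⟨x₁, x₂, a :: y₁, y₂, a :: v₁, v₂, hx, by simp [hy], by simp [hv],
        by simp [hl], Shuffle.right h1, h2⟩

/-- Every shuffle of a word with its reversal is an abelian square. -/
theorem absq_of_shuffle {α : Type*} [DecidableEq α] (v : List α)
    (h : ∃ u : List α, Shuffle u u.reverse v) : IsAbSquare v := by
  obtain ⟨u, hu⟩ := h
  have hvlen : v.length = u.length + u.length := by
    have := hu.length_eq; simpa using this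
  obtain ⟨x₁, x₂, y₁, y₂, v₁, v₂, hx, hy, hv, hl, h1, h2⟩ :=
    hu.split u.length (by omega)
  refine ⟨v₁, v₂, hv, ?_, ?_⟩
  · have : v₁.length + v₂.length = v.length := by rw [hv]; simp
    omega
  · intro a
    -- lengths
    have hl1 : v₁.length = x₁.length + y₁.length := h1.length_eq
    have hy2len : y₂.length = x₁.length := by
      have hyl : u.length = y₁.length + y₂.length := by
        have := congrArg List.length hy; simpa using this
      omega
    -- y₂ = x₁.reverse
    have hrev : u.reverse = x₂.reverse ++ x₁.reverse := by rw [hx]; simp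
    have heq : y₁ ++ y₂ = x₂.reverse ++ x₁.reverse := by rw [← hy, hrev]
    have hy2 : y₂ = x₁.reverse := by
      have := (List.append_inj' heq (by simp [hy2len])).2
      exact this
    have hcy2 : y₂.count a = x₁.count a := by rw [hy2]; simp
    have hcy1 : y₁.count a = x₂.count a := by
      have hu1 : u.count a = x₁.count a + x₂.count a := by rw [hx]; simp
      have hu2 : u.count a = y₁.count a + y₂.count a := by
        have : u.reverse.count a = y₁.count a + y₂.count a := by rw [hy]; simp
        simpa using this
      omega
    have c1 := h1.count_eq a
    have c2 := h2.count_eq a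
    omega

/-- Every binary word is a shuffle of its zeros and its ones. -/
theorem shuffle_rep (w : List (Fin 2)) :
    Shuffle (List.replicate (w.count 0) 0) (List.replicate (w.count 1) 1) w := by
  induction w with
  | nil => simpa using Shuffle.nil
  | cons a w ih =>
    have ha : a = 0 ∨ a = 1 := by fin_cases a; exacts [Or.inl rfl, Or.inr rfl]
    rcases ha with rfl | rfl
    · have h0 : (((0 : Fin 2) :: w).count 0) = w.count 0 + 1 := by simp
      have h1 : (((0 : Fin 2) :: w).count 1) = w.count 1 := by
        simp [List.count_cons]
      rw [h0, h1, List.replicate_succ']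
      have : List.replicate (w.count 0) (0 : Fin 2) ++ [0] =
          (0 : Fin 2) :: List.replicate (w.count 0) 0 := by
        simp [← List.replicate_succ, List.replicate_succ']
      rw [this]
      exact Shuffle.left ih
    · have h0 : (((1 : Fin 2) :: w).count 0) = w.count 0 := by
        simp [List.count_cons]
      have h1 : (((1 : Fin 2) :: w).count 1) = w.count 1 + 1 := by simp
      rw [h0, h1, List.replicate_succ']
      have : List.replicate (w.count 1) (1 : Fin 2) ++ [1] =
          (1 : Fin 2) :: List.replicate (w.count 1) 1 := by
        simp [← List.replicate_succ, List.replicate_succ']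
      rw [this]
      exact Shuffle.right ih

/-- A binary word is an abelian square iff it is a shuffle of some word with its
reversal; moreover, over an arbitrary alphabet, any shuffle of a word with its
reversal is an abelian square. -/
theorem stmt8 :
    (∀ v : List (Fin 2), IsAbSquare v ↔ ∃ u : List (Fin 2), Shuffle u u.reverse v) ∧
      (∀ (α : Type) [DecidableEq α] (v : List α),
        (∃ u : List α, Shuffle u u.reverse v) → IsAbSquare v) := by
  constructor
  · intro v
    constructor
    · rintro ⟨v₁, v₂, rfl, hlen, hcount⟩
      refine ⟨List.replicate (v₁.count 0) 0 ++ List.replicate (v₁.count 1) 1, ?_⟩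
      have hrev : (List.replicate (v₁.count 0) (0 : Fin 2) ++
          List.replicate (v₁.count 1) 1).reverse =
          List.replicate (v₁.count 1) 1 ++ List.replicate (v₁.count 0) 0 := by
        simp
      rw [hrev]
      have h1 := shuffle_rep v₁
      have h2 := (shuffle_rep v₂).comm
      rw [← hcount 0, ← hcount 1] at h2
      exact h1.append h2
    · exact absq_of_shuffle v
  · intro α _ v
    exact absq_of_shuffle v
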